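/- Let B be a convex polygon in ℝ² with rational corners, let m = (c,d) be a basic move, let M = {m}, and let q ≥ 2. Then for every corner v of B that has an antipode w with respect to m, there exists a vertex z = (z_1, …, z_q) of the inside-out polytope (B^q, A_M^q) having both v and w among its components. Consequently, for q ≥ 2 the denominators of vertices of (B^q, A_M^q) realize the denominators of all corners of B and of all their antipodes. -/

import Mathlib

/-- A basic move: a nonzero integer vector with coprime coordinates. -/
def IsBasicMove (m : ℤ × ℤ) : Prop := m ≠ 0 ∧ Int.gcd m.1 m.2 = 1

/-- A board: a convex polygon in ℝ² with rational corners, i.e. the convex hull of a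
finite subset of ℚ², having nonempty interior. -/
def IsBoard (B : Set (ℝ × ℝ)) : Prop :=
  (∃ V : Finset (ℚ × ℚ),
    B = convexHull ℝ ((fun p : ℚ × ℚ => ((p.1 : ℝ), (p.2 : ℝ))) '' (V : Set (ℚ × ℚ)))) ∧
  (interior B).Nonempty

/-- The affine line of an edge (one-dimensional face) of the board `B`. -/
def IsEdgeLine (B : Set (ℝ × ℝ)) (L : Set (ℝ × ℝ)) : Prop :=
  ∃ F : Set (ℝ × ℝ), IsExtreme ℝ B F ∧
    Module.finrank ℝ (affineSpan ℝ F).direction = 1 ∧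
    L = (affineSpan ℝ F : Set (ℝ × ℝ))

/-- The move arrangement: hyperplanes (z_j - z_i)·(d,-c) = 0 for moves m = (c,d) ∈ M. -/
def moveHyps (M : Finset (ℤ × ℤ)) (q : ℕ) : Set (Set (Fin q → ℝ × ℝ)) :=
  {H | ∃ m ∈ M, ∃ i j : Fin q, i < j ∧
    H = {z | ((z j).1 - (z i).1) * (m.2 : ℝ) - ((z j).2 - (z i).2) * (m.1 : ℝ) = 0}}

/-- The facet hyperplanes of B^q: the sets {z : z i ∈ L} for edge lines L of B. -/
def boardFacetHyps (B : Set (ℝ × ℝ)) (q : ℕ) : Set (Set (Fin q → ℝ × ℝ)) :=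
  {H | ∃ i : Fin q, ∃ L : Set (ℝ × ℝ), IsEdgeLine B L ∧ H = {z | z i ∈ L}}

/-- A vertex of the inside-out polytope (B^q, A_M^q): a point of B^q such that the
intersection of all move hyperplanes and facet hyperplanes containing it is exactly it. -/
def IsVertexB (B : Set (ℝ × ℝ)) (M : Finset (ℤ × ℤ)) (q : ℕ) (z : Fin q → ℝ × ℝ) : Prop :=
  (∀ i, z i ∈ B) ∧
  ⋂₀ {H | H ∈ moveHyps M q ∪ boardFacetHyps B q ∧ z ∈ H} = {z}

/-- `w` is the antipode of `v` with respect to the move `m`: the point `w ≠ v` such that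
the intersection of `B` with the line through `v` in direction `m` is the segment `[v,w]`. -/
def IsAntipode (B : Set (ℝ × ℝ)) (m : ℤ × ℤ) (v w : ℝ × ℝ) : Prop :=
  w ≠ v ∧ B ∩ {p | ∃ t : ℝ, p = v + t • ((m.1 : ℝ), (m.2 : ℝ))} = segment ℝ v w

lemma isExtreme_union' {A B C : Set (ℝ × ℝ)} (hB : IsExtreme ℝ A B) (hC : IsExtreme ℝ A C) :
    IsExtreme ℝ A (B ∪ C) := by
  refine ⟨Set.union_subset hB.1 hC.1, ?_⟩
  intro x1 h1 x2 h2 x hx hseg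
  rcases hx with hx | hx
  · exact Or.inl (hB.2 h1 h2 hx hseg)
  · exact Or.inr (hC.2 h1 h2 hx hseg)

lemma mem_affineSpan_pair_iff (p a x : ℝ × ℝ) :
    x ∈ (affineSpan ℝ ({p, a} : Set (ℝ × ℝ)) : Set (ℝ × ℝ)) ↔
      ∃ c : ℝ, x - p = c • (a - p) := by
  have hp : p ∈ affineSpan ℝ ({p, a} : Set (ℝ × ℝ)) := mem_affineSpan ℝ (by simp)
  rw [SetLike.mem_coe, ← AffineSubspace.vsub_right_mem_direction_iff_mem hp x,
    direction_affineSpan, vectorSpan_pair]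
  simp only [vsub_eq_sub, Submodule.mem_span_singleton]
  constructor
  · rintro ⟨c, hc⟩; exact ⟨-c, by rw [← hc]; module⟩
  · rintro ⟨c, hc⟩; exact ⟨-c, by rw [hc]; module⟩

lemma isEdgeLine_chord {B : Set (ℝ × ℝ)} {a b : ℝ × ℝ} (ha : a ∈ Set.extremePoints ℝ B)
    (hb : b ∈ Set.extremePoints ℝ B) (hab : a ≠ b) :
    IsEdgeLine B (affineSpan ℝ ({a, b} : Set (ℝ × ℝ)) : Set (ℝ × ℝ)) := by
  refine ⟨{a, b}, ?_, ?_, rfl⟩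
  · have := isExtreme_union' (isExtreme_singleton.2 hb) (isExtreme_singleton.2 ha)
    simpa using this
  · rw [direction_affineSpan, vectorSpan_pair]
    have hne : a -ᵥ b ≠ 0 := by simpa [vsub_eq_sub, sub_eq_zero] using hab
    exact finrank_span_singleton hne

lemma not_extremePoints_subset_line {B : Set (ℝ × ℝ)} (hB : IsBoard B)
    (A : AffineSubspace ℝ (ℝ × ℝ)) (hA : Module.finrank ℝ A.direction ≤ 1)
    (hsub : Set.extremePoints ℝ B ⊆ (A : Set (ℝ × ℝ))) : False := by
  obtain ⟨⟨V, hV⟩, hint⟩ := hB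
  have hconv : Convex ℝ B := hV ▸ convex_convexHull ℝ _
  have hcomp : IsCompact B := hV ▸ (((V : Set (ℚ × ℚ)).toFinite.image _).isCompact_convexHull ℝ)
  have hKM : closure (convexHull ℝ (Set.extremePoints ℝ B)) = B :=
    closure_convexHull_extremePoints hcomp hconv
  have hBA : B ⊆ (A : Set (ℝ × ℝ)) := by
    rw [← hKM]
    exact closure_minimal (convexHull_min hsub A.convex)
      (AffineSubspace.closed_of_finiteDimensional A)
  have htop : affineSpan ℝ B = ⊤ := (hconv.interior_nonempty_iff_affineSpan_eq_top).1 hint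
  have hle : (⊤ : AffineSubspace ℝ (ℝ × ℝ)) ≤ A := htop ▸ affineSpan_le.2 hBA
  have hA2 : A = ⊤ := top_le_iff.1 hle
  rw [hA2, AffineSubspace.direction_top] at hA
  rw [finrank_top] at hA
  have : Module.finrank ℝ (ℝ × ℝ) = 2 := by
    rw [Module.finrank_prod, Module.finrank_self]
  omega

lemma exists_two_chords {B : Set (ℝ × ℝ)} (hB : IsBoard B) {p : ℝ × ℝ}
    (hp : p ∈ Set.extremePoints ℝ B) :
    ∃ a b : ℝ × ℝ, a ∈ Set.extremePoints ℝ B ∧ b ∈ Set.extremePoints ℝ B ∧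
      a ≠ p ∧ b ≠ p ∧ b - p ∉ Submodule.span ℝ {a - p} := by
  have h1 : ∃ a ∈ Set.extremePoints ℝ B, a ≠ p := by
    by_contra h
    push_neg at h
    refine not_extremePoints_subset_line hB (affineSpan ℝ {p}) ?_ ?_
    · rw [direction_affineSpan]
      rw [vectorSpan_singleton (k := ℝ) p]
      simp
    · intro x hx
      rw [h x hx]
      exact subset_affineSpan ℝ _ rfl
  obtain ⟨a, ha, hap⟩ := h1
  have h2 : ∃ b ∈ Set.extremePoints ℝ B, b - p ∉ Submodule.span ℝ {a - p} := by
    by_contra h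
    push_neg at h
    refine not_extremePoints_subset_line hB (affineSpan ℝ {p, a}) ?_ ?_
    · rw [direction_affineSpan, vectorSpan_pair]
      by_cases h0 : (p -ᵥ a : ℝ × ℝ) = 0
      · rw [h0, Submodule.span_zero_singleton]; simp
      · rw [finrank_span_singleton h0]
    · intro x hx
      obtain ⟨c, hc⟩ := Submodule.mem_span_singleton.1 (h x hx)
      exact (mem_affineSpan_pair_iff p a x).2 ⟨c, hc.symm⟩
  obtain ⟨b, hb, hbp⟩ := h2
  have hbp' : b ≠ p := by
    rintro rfl
    exact hbp (by simp)
  exact ⟨a, b, ha, hb, hap, hbp', hbp⟩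

lemma pin_point {p u1 u2 x : ℝ × ℝ} (h1 : u1 ≠ 0) (h2 : u2 ∉ Submodule.span ℝ {u1})
    (hx1 : ∃ c : ℝ, x - p = c • u1) (hx2 : ∃ c : ℝ, x - p = c • u2) : x = p := by
  obtain ⟨c, hc⟩ := hx1
  obtain ⟨d, hd⟩ := hx2
  by_cases hdz : d = 0
  · have : x - p = 0 := by rw [hd, hdz, zero_smul]
    exact sub_eq_zero.1 this
  · exfalso
    apply h2
    rw [Submodule.mem_span_singleton]
    refine ⟨d⁻¹ * c, ?_⟩
    have h3 : d • u2 = c • u1 := by rw [← hc, ← hd]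
    calc (d⁻¹ * c) • u1 = d⁻¹ • (c • u1) := by rw [mul_smul]
      _ = d⁻¹ • (d • u2) := by rw [h3]
      _ = u2 := inv_smul_smul₀ hdz u2

lemma pin_extreme {B : Set (ℝ × ℝ)} (hB : IsBoard B) {p : ℝ × ℝ}
    (hp : p ∈ Set.extremePoints ℝ B) :
    ∃ L1 L2 : Set (ℝ × ℝ), IsEdgeLine B L1 ∧ IsEdgeLine B L2 ∧ p ∈ L1 ∧ p ∈ L2 ∧
      ∀ x, x ∈ L1 → x ∈ L2 → x = p := by
  obtain ⟨a, b, ha, hb, hap, hbp, hind⟩ := exists_two_chords hB hp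
  refine ⟨_, _, isEdgeLine_chord hp ha (Ne.symm hap), isEdgeLine_chord hp hb (Ne.symm hbp),
    subset_affineSpan ℝ _ (by simp), subset_affineSpan ℝ _ (by simp), ?_⟩
  intro x hx1 hx2
  exact pin_point (sub_ne_zero.2 hap) hind
    ((mem_affineSpan_pair_iff p a x).1 hx1) ((mem_affineSpan_pair_iff p b x).1 hx2)

lemma pin_extreme_rel {B : Set (ℝ × ℝ)} (hB : IsBoard B) {p : ℝ × ℝ}
    (hp : p ∈ Set.extremePoints ℝ B) {mv : ℝ × ℝ} (hmv : mv ≠ 0) :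
    ∃ L, IsEdgeLine B L ∧ p ∈ L ∧ ∀ x, x ∈ L → (∃ t : ℝ, x = p + t • mv) → x = p := by
  obtain ⟨a, b, ha, hb, hap, hbp, hind⟩ := exists_two_chords hB hp
  by_cases hcase : a - p ∈ Submodule.span ℝ {mv}
  · -- use b
    have hbmv : b - p ∉ Submodule.span ℝ {mv} := by
      intro hbm
      apply hind
      obtain ⟨c, hc⟩ := Submodule.mem_span_singleton.1 hcase
      obtain ⟨e, he⟩ := Submodule.mem_span_singleton.1 hbm
      have hc0 : c ≠ 0 := by
        rintro rfl
        exact hap (by rw [← sub_eq_zero, ← hc, zero_smul])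
      rw [Submodule.mem_span_singleton]
      refine ⟨e / c, ?_⟩
      rw [← hc, ← he, smul_smul]
      congr 1
      field_simp
    refine ⟨_, isEdgeLine_chord hp hb (Ne.symm hbp), subset_affineSpan ℝ _ (by simp), ?_⟩
    intro x hx ⟨t, ht⟩
    refine pin_point hmv hbmv ⟨t, by rw [ht]; abel⟩ ((mem_affineSpan_pair_iff p b x).1 hx)
  · refine ⟨_, isEdgeLine_chord hp ha (Ne.symm hap), subset_affineSpan ℝ _ (by simp), ?_⟩
    intro x hx ⟨t, ht⟩
    refine pin_point hmv hcase ⟨t, by rw [ht]; abel⟩ ((mem_affineSpan_pair_iff p a x).1 hx)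

lemma line_param {c d : ℝ} (hcd : (c, d) ≠ ((0 : ℝ), (0 : ℝ))) {pt q : ℝ × ℝ}
    (h : (pt.1 - q.1) * d - (pt.2 - q.2) * c = 0) :
    ∃ t : ℝ, pt = q + t • ((c, d) : ℝ × ℝ) := by
  by_cases hc : c ≠ 0
  · refine ⟨(pt.1 - q.1) / c, ?_⟩
    have h2 : pt.2 - q.2 = (pt.1 - q.1) / c * d := by
      field_simp
      nlinarith [h]
    ext
    · simp [Prod.smul_mk]
      field_simp
      ring
    · simp [Prod.smul_mk]
      linarith [h2]
  · push_neg at hc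
    have hd : d ≠ 0 := by
      rintro rfl
      exact hcd (by rw [hc])
    refine ⟨(pt.2 - q.2) / d, ?_⟩
    have h1 : pt.1 - q.1 = 0 := by
      subst hc
      have h' : (pt.1 - q.1) * d = 0 := by linear_combination h
      rcases mul_eq_zero.1 h' with h'' | h''
      · exact h''
      · exact absurd h'' hd
    ext
    · simp [Prod.smul_mk, hc]
      linarith [h1]
    · simp [Prod.smul_mk]
      field_simp
      ring

lemma seg_param {mv v w : ℝ × ℝ} {t0 : ℝ} (ht0 : w = v + t0 • mv) {x : ℝ × ℝ}
    (hx : x ∈ segment ℝ v w) : ∃ b : ℝ, 0 ≤ b ∧ b ≤ 1 ∧ x = v + (b * t0) • mv := by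
  obtain ⟨a, b, ha, hb, hab, habx⟩ := hx
  refine ⟨b, hb, by linarith, ?_⟩
  have ha1 : a = 1 - b := by linarith
  rw [← habx, ht0, ha1]
  module

set_option maxHeartbeats 1000000 in
lemma pin_w {B : Set (ℝ × ℝ)} (hB : IsBoard B) {mv v w : ℝ × ℝ} (hmv : mv ≠ 0)
    (hws : B ∩ {p | ∃ t : ℝ, p = v + t • mv} = segment ℝ v w) (hwv : w ≠ v) :
    ∃ L, IsEdgeLine B L ∧ w ∈ L ∧ ∀ x, x ∈ L → (∃ t : ℝ, x = w + t • mv) → x = w := by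
  by_cases hwe : w ∈ Set.extremePoints ℝ B
  · exact pin_extreme_rel hB hwe hmv
  obtain ⟨⟨V, hV⟩, hint⟩ := id hB
  have hconv : Convex ℝ B := hV ▸ convex_convexHull ℝ _
  have hwB' : w ∈ B ∩ {p | ∃ t : ℝ, p = v + t • mv} := by
    rw [hws]; exact right_mem_segment ℝ v w
  have hwB : w ∈ B := hwB'.1
  obtain ⟨t0, ht0⟩ := hwB'.2
  have ht00 : t0 ≠ 0 := fun h => hwv (by rw [ht0, h, zero_smul, add_zero])
  -- w is not interior
  have hwint : w ∉ interior B := by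
    intro hin
    rw [mem_interior_iff_mem_nhds, Metric.mem_nhds_iff] at hin
    obtain ⟨ε, hε, hball⟩ := hin
    set δ : ℝ := ε / (|t0| * ‖mv‖ + 1) with hδdef
    have hd1 : (0:ℝ) < |t0| * ‖mv‖ + 1 := by positivity
    have hδ : 0 < δ := div_pos hε hd1
    set p' : ℝ × ℝ := v + ((1 + δ) * t0) • mv with hp'
    have hdist : dist p' w < ε := by
      rw [dist_eq_norm]
      have hsub : p' - w = (δ * t0) • mv := by rw [hp', ht0]; module
      rw [hsub, norm_smul]
      have habs : ‖δ * t0‖ = δ * |t0| := by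
        rw [Real.norm_eq_abs, abs_mul, abs_of_pos hδ]
      rw [habs, hδdef]
      rw [div_mul_eq_mul_div, div_mul_eq_mul_div, div_lt_iff₀ hd1]
      have hnn : 0 ≤ |t0| * ‖mv‖ := by positivity
      nlinarith
    have hp'B : p' ∈ B := hball (Metric.mem_ball.2 hdist)
    have hp'seg : p' ∈ segment ℝ v w := by
      rw [← hws]; exact ⟨hp'B, ⟨(1 + δ) * t0, rfl⟩⟩
    obtain ⟨b, hb0, hb1, hbx⟩ := seg_param ht0 hp'seg
    have key : (b * t0 - (1 + δ) * t0) • mv = 0 := by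
      have : v + (b * t0) • mv = v + ((1 + δ) * t0) • mv := by rw [← hbx, hp']
      have h2 := congrArg (fun y => y - v) this
      simp only [add_sub_cancel_left] at h2
      rw [sub_smul, h2, sub_self]
    rcases smul_eq_zero.1 key with hco | hmv0
    · have : b = 1 + δ := by
        have := sub_eq_zero.1 hco
        exact mul_right_cancel₀ ht00 this
      linarith
    · exact hmv hmv0
  -- separating functional
  obtain ⟨f, hf⟩ := geometric_hahn_banach_open_point (hconv.interior) isOpen_interior hwint
  obtain ⟨x0, hx0⟩ := hint
  have hle : ∀ p ∈ B, f p ≤ f w := by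
    intro p hp
    have hev : ∀ a : ℝ, a ∈ Set.Ioc (0:ℝ) 1 → a * f x0 + (1 - a) * f p ≤ f w := by
      rintro a ⟨ha0, ha1⟩
      have hmem : a • x0 + (1 - a) • p ∈ interior B :=
        hconv.combo_interior_self_mem_interior hx0 hp ha0 (by linarith) (by ring)
      have := hf _ hmem
      simpa [map_add, map_smul, smul_eq_mul] using this.le
    have htend : Filter.Tendsto (fun a : ℝ => a * f x0 + (1 - a) * f p)
        (nhdsWithin 0 (Set.Ioi 0)) (nhds (f p)) := by
      have hc : Continuous (fun a : ℝ => a * f x0 + (1 - a) * f p) := by continuity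
      have := hc.tendsto 0
      simp only [zero_mul, sub_zero, one_mul, zero_add] at this
      exact this.mono_left nhdsWithin_le_nhds
    refine le_of_tendsto htend ?_
    filter_upwards [Filter.inter_mem self_mem_nhdsWithin
      (nhdsWithin_le_nhds (Iio_mem_nhds (by norm_num : (0:ℝ) < 1)))] with a ha
    exact hev a ⟨ha.1, le_of_lt ha.2⟩
  -- the exposed face
  set F : Set (ℝ × ℝ) := {x ∈ B | ∀ y ∈ B, f y ≤ f x} with hF
  have hwF : w ∈ F := ⟨hwB, hle⟩
  have hexp : IsExposed ℝ B F := fun _ => ⟨f, rfl⟩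
  have hext : IsExtreme ℝ B F := hexp.isExtreme
  have hFval : ∀ x ∈ F, f x = f w := fun x hx => le_antisymm (hle x hx.1) (hx.2 w hwB)
  -- f is nonzero on w - x0
  have hfwx : f w - f x0 > 0 := sub_pos.2 (hf x0 hx0)
  -- kernel has finrank 1
  have hker : Module.finrank ℝ (LinearMap.ker (f : (ℝ × ℝ) →ₗ[ℝ] ℝ)) = 1 := by
    have hrn := LinearMap.finrank_range_add_finrank_ker (f : (ℝ × ℝ) →ₗ[ℝ] ℝ)
    have hdom : Module.finrank ℝ (ℝ × ℝ) = 2 := by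
      rw [Module.finrank_prod, Module.finrank_self]
    have hrle : Module.finrank ℝ (LinearMap.range (f : (ℝ × ℝ) →ₗ[ℝ] ℝ)) ≤ 1 := by
      have := Submodule.finrank_le (LinearMap.range (f : (ℝ × ℝ) →ₗ[ℝ] ℝ))
      simpa using this
    have hrne : Module.finrank ℝ (LinearMap.range (f : (ℝ × ℝ) →ₗ[ℝ] ℝ)) ≠ 0 := by
      intro h0
      rw [Submodule.finrank_eq_zero] at h0
      have : f (w - x0) ∈ LinearMap.range (f : (ℝ × ℝ) →ₗ[ℝ] ℝ) := ⟨w - x0, rfl⟩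
      rw [h0] at this
      simp only [Submodule.mem_bot] at this
      rw [map_sub] at this
      linarith
    omega
  -- direction of affine span of F is inside ker f
  have hdirker : (affineSpan ℝ F).direction ≤ LinearMap.ker (f : (ℝ × ℝ) →ₗ[ℝ] ℝ) := by
    rw [direction_affineSpan]
    apply Submodule.span_le.2
    rintro u ⟨x, hx, y, hy, rfl⟩
    simp only [SetLike.mem_coe, LinearMap.mem_ker, vsub_eq_sub, ContinuousLinearMap.coe_coe,
      map_sub]
    rw [hFval x hx, hFval y hy, sub_self]
  have hdle : Module.finrank ℝ (affineSpan ℝ F).direction ≤ 1 := by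
    have := Submodule.finrank_mono hdirker
    omega
  -- dimension case analysis
  rcases Nat.lt_or_ge (Module.finrank ℝ (affineSpan ℝ F).direction) 1 with hd0 | hd1
  · -- finrank 0: F = {w}, so w is extreme, contradiction
    exfalso
    have h0 : (affineSpan ℝ F).direction = ⊥ := by
      rw [← Submodule.finrank_eq_zero (R := ℝ)]
      omega
    have hFsub : F ⊆ {w} := by
      intro x hx
      have hmem : x -ᵥ w ∈ (affineSpan ℝ F).direction :=
        AffineSubspace.vsub_mem_direction (mem_affineSpan ℝ hx) (mem_affineSpan ℝ hwF)
      rw [h0, Submodule.mem_bot] at hmem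
      have : x - w = 0 := hmem
      simp [sub_eq_zero.1 this]
    have hFeq : F = {w} := Set.Subset.antisymm hFsub (by simp [hwF])
    rw [hFeq] at hext
    exact hwe (isExtreme_singleton.1 hext)
  · have hd1' : Module.finrank ℝ (affineSpan ℝ F).direction = 1 := le_antisymm hdle hd1
    -- direction = ker f
    have hdeq : (affineSpan ℝ F).direction = LinearMap.ker (f : (ℝ × ℝ) →ₗ[ℝ] ℝ) :=
      Submodule.eq_of_le_of_finrank_le hdirker (by omega)
    -- mv is not in ker f
    have hmvker : f mv ≠ 0 := by
      intro hfmv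
      apply hwe
      -- then direction = span mv and F ⊆ segment v w, making w extreme
      have hsp : Submodule.span ℝ {mv} ≤ LinearMap.ker (f : (ℝ × ℝ) →ₗ[ℝ] ℝ) := by
        rw [Submodule.span_le]
        intro u hu
        rw [Set.mem_singleton_iff] at hu
        subst hu
        simpa using hfmv
      have hspeq : Submodule.span ℝ {mv} = LinearMap.ker (f : (ℝ × ℝ) →ₗ[ℝ] ℝ) :=
        Submodule.eq_of_le_of_finrank_le hsp (by rw [hker, finrank_span_singleton hmv])
      have hFseg : F ⊆ segment ℝ v w := by
        intro x hx
        have hmem : x -ᵥ w ∈ (affineSpan ℝ F).direction :=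
          AffineSubspace.vsub_mem_direction (mem_affineSpan ℝ hx) (mem_affineSpan ℝ hwF)
        rw [hdeq, ← hspeq, Submodule.mem_span_singleton] at hmem
        obtain ⟨c, hc⟩ := hmem
        have hxline : x = v + (t0 + c) • mv := by
          have : x - w = c • mv := hc.symm ▸ rfl
          have hx' : x = w + c • mv := by rw [← this]; abel
          rw [hx', ht0]; module
        rw [← hws]
        exact ⟨hx.1, ⟨t0 + c, hxline⟩⟩
      -- w is an extreme point of F
      have hwextF : w ∈ Set.extremePoints ℝ F := by
        refine ⟨hwF, ?_⟩
        intro x1 hx1 x2 hx2 hseg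
        obtain ⟨b1, hb10, hb11, hx1e⟩ := seg_param ht0 (hFseg hx1)
        obtain ⟨b2, hb20, hb21, hx2e⟩ := seg_param ht0 (hFseg hx2)
        obtain ⟨α, β, hα, hβ, hαβ, habw⟩ := hseg
        have key : ((α * (b1 * t0) + β * (b2 * t0)) - t0) • mv = 0 := by
          have : α • x1 + β • x2 = v + t0 • mv := by rw [habw, ht0]
          rw [hx1e, hx2e] at this
          have h2 : v + (α * (b1 * t0) + β * (b2 * t0)) • mv = v + t0 • mv := by
            rw [← this]
            have hαβ' : α + β = 1 := hαβ
            have : α • (v + (b1 * t0) • mv) + β • (v + (b2 * t0) • mv)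
                = (α + β) • v + (α * (b1 * t0) + β * (b2 * t0)) • mv := by module
            rw [this, hαβ', one_smul]
          have h3 := congrArg (fun y => y - v) h2
          simp only [add_sub_cancel_left] at h3
          rw [sub_smul, h3, sub_self]
        have hco : α * (b1 * t0) + β * (b2 * t0) = t0 := by
          rcases smul_eq_zero.1 key with h | h
          · linarith [sub_eq_zero.1 h]
          · exact absurd h hmv
        have hb1eq : b1 = 1 ∧ b2 = 1 := by
          have hc : α * b1 + β * b2 = 1 := by
            have h4 : (α * b1 + β * b2 - 1) * t0 = 0 := by linear_combination hco
            rcases mul_eq_zero.1 h4 with h5 | h5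
            · linarith
            · exact absurd h5 ht00
          constructor <;> nlinarith
        · rw [hx1e, hb1eq.1, one_mul, ← ht0]
      exact hext.extremePoints_subset_extremePoints hwextF
    -- conclusion
    refine ⟨(affineSpan ℝ F : Set (ℝ × ℝ)), ⟨F, hext, hd1', rfl⟩,
      subset_affineSpan ℝ F hwF, ?_⟩
    rintro x hx ⟨t, ht⟩
    have hmem : x -ᵥ w ∈ (affineSpan ℝ F).direction :=
      AffineSubspace.vsub_mem_direction hx (mem_affineSpan ℝ hwF)
    rw [hdeq, LinearMap.mem_ker] at hmem
    have : f (x - w) = 0 := hmem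
    rw [ht] at this
    simp only [add_sub_cancel_left, map_smul, smul_eq_mul] at this
    rcases mul_eq_zero.1 this with h | h
    · rw [ht, h, zero_smul, add_zero]
    · exact absurd h hmvker

set_option maxHeartbeats 1000000 in
theorem stmt6 (B : Set (ℝ × ℝ)) (hB : IsBoard B) (m : ℤ × ℤ) (hm : IsBasicMove m)
    (q : ℕ) (hq : 2 ≤ q) (v : ℝ × ℝ) (hv : v ∈ Set.extremePoints ℝ B)
    (w : ℝ × ℝ) (hw : IsAntipode B m v w) :
    ∃ z : Fin q → ℝ × ℝ, IsVertexB B {m} q z ∧ (∃ i, z i = v) ∧ (∃ j, z j = w) := by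
  obtain ⟨hwv, hws⟩ := hw
  set mv : ℝ × ℝ := ((m.1 : ℝ), (m.2 : ℝ)) with hmvdef
  have hmv : mv ≠ 0 := by
    intro h
    apply hm.1
    have h1 : (m.1 : ℝ) = 0 := congrArg Prod.fst h
    have h2 : (m.2 : ℝ) = 0 := congrArg Prod.snd h
    exact Prod.ext (by exact_mod_cast h1) (by exact_mod_cast h2)
  have hvB : v ∈ B := hv.1
  have hwB' : w ∈ B ∩ {p | ∃ t : ℝ, p = v + t • mv} := by
    rw [hws]; exact right_mem_segment ℝ v w
  have hwB : w ∈ B := hwB'.1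
  obtain ⟨t0, ht0⟩ := hwB'.2
  obtain ⟨L1, L2, hL1, hL2, hvL1, hvL2, hpinv⟩ := pin_extreme hB hv
  obtain ⟨L3, hL3, hwL3, hpinw⟩ := pin_w hB hmv hws hwv
  set i0 : Fin q := ⟨0, by omega⟩ with hi0
  set i1 : Fin q := ⟨1, by omega⟩ with hi1
  have hi10 : i1 ≠ i0 := by
    rw [hi0, hi1]
    intro hc
    have := congrArg Fin.val hc
    simp at this
  set z : Fin q → ℝ × ℝ := fun i => if i = i0 then v else w with hz
  have hz0 : z i0 = v := by simp [hz]
  have hzi : ∀ i, i ≠ i0 → z i = w := fun i hi => by simp [hz, hi]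
  refine ⟨z, ⟨?_, ?_⟩, ⟨i0, hz0⟩, ⟨i1, hzi i1 hi10⟩⟩
  · intro i
    by_cases h : i = i0
    · rw [h, hz0]; exact hvB
    · rw [hzi i h]; exact hwB
  · rw [Set.eq_singleton_iff_unique_mem]
    constructor
    · exact Set.mem_sInter.2 fun H hH => hH.2
    · intro y hy
      rw [Set.mem_sInter] at hy
      have hy0 : y i0 = v := by
        have m1 : y i0 ∈ L1 := hy {s | s i0 ∈ L1}
          ⟨Or.inr ⟨i0, L1, hL1, rfl⟩, show z i0 ∈ L1 by rw [hz0]; exact hvL1⟩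
        have m2 : y i0 ∈ L2 := hy {s | s i0 ∈ L2}
          ⟨Or.inr ⟨i0, L2, hL2, rfl⟩, show z i0 ∈ L2 by rw [hz0]; exact hvL2⟩
        exact hpinv _ m1 m2
      funext i
      by_cases h : i = i0
      · rw [h, hy0, hz0]
      · have hi0lt : i0 < i := by
          have hne : i.1 ≠ 0 := by
            intro hc
            exact h (Fin.ext (by rw [hc, hi0]))
          rw [hi0, Fin.lt_def]
          simpa using Nat.pos_of_ne_zero hne
        have hzmove : ((z i).1 - (z i0).1) * ((m.2 : ℤ) : ℝ)
            - ((z i).2 - (z i0).2) * ((m.1 : ℤ) : ℝ) = 0 := by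
          rw [hzi i h, hz0, ht0]
          simp only [hmvdef, Prod.smul_mk, Prod.fst_add, Prod.snd_add, smul_eq_mul]
          ring
        have hmove : ((y i).1 - (y i0).1) * ((m.2 : ℤ) : ℝ)
            - ((y i).2 - (y i0).2) * ((m.1 : ℤ) : ℝ) = 0 :=
          hy {s | ((s i).1 - (s i0).1) * ((m.2 : ℤ) : ℝ)
              - ((s i).2 - (s i0).2) * ((m.1 : ℤ) : ℝ) = 0}
            ⟨Or.inl ⟨m, Finset.mem_singleton_self m, i0, i, hi0lt, rfl⟩, hzmove⟩
        have hline : ∃ t : ℝ, y i = v + t • mv := by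
          rw [← hy0]
          exact line_param (by rw [← hmvdef]; exact hmv) hmove
        have hline' : ∃ t : ℝ, y i = w + t • mv := by
          obtain ⟨t, ht⟩ := hline
          exact ⟨t - t0, by rw [ht, ht0]; module⟩
        have m3 : y i ∈ L3 := hy {s | s i ∈ L3}
          ⟨Or.inr ⟨i, L3, hL3, rfl⟩, show z i ∈ L3 by rw [hzi i h]; exact hwL3⟩
        rw [hzi i h]
        exact hpinw _ m3 hline'
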